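/- Let n = 2^k with k ≥ 1, let S be the 2k × n signature matrix, and let D be a nonempty set of column indices. Then the entrywise OR of the columns {S_j : j ∈ D} has weight at least k, with equality if and only if |D| = 1. -/

import Mathlib

/-- The `2k × 2^k` signature matrix: the column indexed by `j` consists of the `k`-bit
binary representation of `j` followed by its bitwise complement. -/
def sig (k : ℕ) : Fin (2 * k) → Fin (2 ^ k) → Bool :=
  fun l j => if (l : ℕ) < k then (j : ℕ).testBit l else !((j : ℕ).testBit ((l : ℕ) - k))

/-- Auxiliary embedding: the top half of the rows. -/
def sigEmb1 (k : ℕ) : Fin k ↪ Fin (2 * k) :=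
  ⟨fun i => ⟨i, by have := i.isLt; omega⟩,
   fun a b h => Fin.ext (by have := congrArg Fin.val h; simpa using this)⟩

/-- Auxiliary embedding: the bottom half of the rows. -/
def sigEmb2 (k : ℕ) : Fin k ↪ Fin (2 * k) :=
  ⟨fun i => ⟨(i : ℕ) + k, by have := i.isLt; omega⟩,
   fun a b h => Fin.ext (by have := congrArg Fin.val h; simp at this; omega)⟩

lemma sigEmb1_val (k : ℕ) (i : Fin k) : ((sigEmb1 k i : Fin (2 * k)) : ℕ) = i := rfl

lemma sigEmb2_val (k : ℕ) (i : Fin k) : ((sigEmb2 k i : Fin (2 * k)) : ℕ) = i + k := rfl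

lemma sig_emb1 (k : ℕ) (i : Fin k) (j : Fin (2 ^ k)) :
    sig k (sigEmb1 k i) j = (j : ℕ).testBit i := by
  simp [sig, sigEmb1_val, i.isLt]

lemma sig_emb2 (k : ℕ) (i : Fin k) (j : Fin (2 ^ k)) :
    sig k (sigEmb2 k i) j = !((j : ℕ).testBit i) := by
  have h1 : ¬ ((i : ℕ) + k < k) := by omega
  simp [sig, sigEmb2_val, h1]

/-- for a nonempty set `D` of column indices, the entrywise OR `o` of the
columns of the signature matrix indexed by `D` has weight at least `k`, with equality
if and only if `|D| = 1`. -/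
theorem sig_or_weight (k : ℕ) (hk : 1 ≤ k) (D : Finset (Fin (2 ^ k))) (hD : D.Nonempty)
    (o : Fin (2 * k) → Bool) (ho : ∀ l, o l = true ↔ ∃ j ∈ D, sig k l j = true) :
    k ≤ (Finset.univ.filter fun l => o l = true).card ∧
      ((Finset.univ.filter fun l => o l = true).card = k ↔ D.card = 1) := by
  classical
  set T := Finset.univ.filter fun l => o l = true with hT
  set A := Finset.univ.filter (fun i : Fin k => o (sigEmb1 k i) = true) with hA
  set B := Finset.univ.filter (fun i : Fin k => o (sigEmb2 k i) = true) with hB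
  -- T.card = A.card + B.card
  have hcard : T.card = A.card + B.card := by
    have hTeq : T = A.map (sigEmb1 k) ∪ B.map (sigEmb2 k) := by
      ext l
      simp only [hT, hA, hB, Finset.mem_filter, Finset.mem_univ, true_and,
        Finset.mem_union, Finset.mem_map]
      constructor
      · intro hl
        rcases lt_or_ge (l : ℕ) k with h | h
        · left
          refine ⟨⟨(l : ℕ), h⟩, ?_, Fin.ext (sigEmb1_val k _)⟩
          have : sigEmb1 k ⟨(l : ℕ), h⟩ = l := Fin.ext (sigEmb1_val k _)
          rw [this]; exact hl
        · right
          have hlk : (l : ℕ) - k < k := by have := l.isLt; omega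
          have hval : sigEmb2 k ⟨(l : ℕ) - k, hlk⟩ = l := by
            apply Fin.ext; rw [sigEmb2_val]; simp; omega
          exact ⟨⟨(l : ℕ) - k, hlk⟩, by rw [hval]; exact hl, hval⟩
      · rintro (⟨i, hi, rfl⟩ | ⟨i, hi, rfl⟩) <;> exact hi
    have hdisj : Disjoint (A.map (sigEmb1 k)) (B.map (sigEmb2 k)) := by
      rw [Finset.disjoint_left]
      intro l hl1 hl2
      simp only [Finset.mem_map] at hl1 hl2
      obtain ⟨i, -, rfl⟩ := hl1
      obtain ⟨i', -, h⟩ := hl2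
      have h' := congrArg Fin.val h
      rw [sigEmb1_val, sigEmb2_val] at h'
      have := i.isLt
      omega
    rw [hTeq, Finset.card_union_of_disjoint hdisj, Finset.card_map, Finset.card_map]
  -- A ∪ B = univ
  have hunion : A ∪ B = Finset.univ := by
    apply Finset.eq_univ_of_forall
    intro i
    obtain ⟨j, hj⟩ := hD
    rcases hb : (j : ℕ).testBit i with hb' | hb'
    · refine Finset.mem_union_right _ ?_
      simp only [hB, Finset.mem_filter, Finset.mem_univ, true_and]
      exact (ho _).2 ⟨j, hj, by simp [sig_emb2, hb]⟩
    · refine Finset.mem_union_left _ ?_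
      simp only [hA, Finset.mem_filter, Finset.mem_univ, true_and]
      exact (ho _).2 ⟨j, hj, by simp [sig_emb1, hb]⟩
  have hcard2 : T.card = k + (A ∩ B).card := by
    have := Finset.card_union_add_card_inter A B
    rw [hunion, Finset.card_univ, Fintype.card_fin] at this
    omega
  refine ⟨by omega, ?_⟩
  rw [hcard2]
  constructor
  · intro heq
    have hABempty : A ∩ B = ∅ := Finset.card_eq_zero.mp (by omega)
    obtain ⟨a, ha⟩ := hD
    rw [Finset.card_eq_one]
    refine ⟨a, Finset.eq_singleton_iff_unique_mem.mpr ⟨ha, fun b hb => ?_⟩⟩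
    by_contra hne
    have hne' : (b : ℕ) ≠ (a : ℕ) := fun h => hne (Fin.ext h)
    have : ¬ ∀ i, (b : ℕ).testBit i = (a : ℕ).testBit i :=
      fun h => hne' (Nat.eq_of_testBit_eq h)
    push_neg at this
    obtain ⟨i, hi⟩ := this
    have hik : i < k := by
      by_contra hik
      push_neg at hik
      have h2 : (2 : ℕ) ^ k ≤ 2 ^ i := Nat.pow_le_pow_right (by norm_num) hik
      have hb0 : (b : ℕ).testBit i = false :=
        Nat.testBit_lt_two_pow (lt_of_lt_of_le b.isLt h2)
      have ha0 : (a : ℕ).testBit i = false :=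
        Nat.testBit_lt_two_pow (lt_of_lt_of_le a.isLt h2)
      exact hi (hb0.trans ha0.symm)
    have hmem : (⟨i, hik⟩ : Fin k) ∈ A ∩ B := by
      rcases hbv : (b : ℕ).testBit i with hb' | hb'
      · have hav : (a : ℕ).testBit i = true := by
          rcases hav : (a : ℕ).testBit i with h | h
          · exact absurd (hbv.trans hav.symm) hi
          · rfl
        refine Finset.mem_inter.mpr ⟨?_, ?_⟩
        · simp only [hA, Finset.mem_filter, Finset.mem_univ, true_and]
          exact (ho _).2 ⟨a, ha, by rw [sig_emb1]; exact hav⟩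
        · simp only [hB, Finset.mem_filter, Finset.mem_univ, true_and]
          exact (ho _).2 ⟨b, hb, by rw [sig_emb2]; simp [hbv]⟩
      · have hav : (a : ℕ).testBit i = false := by
          rcases hav : (a : ℕ).testBit i with h | h
          · rfl
          · exact absurd (hbv.trans hav.symm) hi
        refine Finset.mem_inter.mpr ⟨?_, ?_⟩
        · simp only [hA, Finset.mem_filter, Finset.mem_univ, true_and]
          exact (ho _).2 ⟨b, hb, by rw [sig_emb1]; exact hbv⟩
        · simp only [hB, Finset.mem_filter, Finset.mem_univ, true_and]
          exact (ho _).2 ⟨a, ha, by rw [sig_emb2]; simp [hav]⟩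
    rw [hABempty] at hmem
    exact absurd hmem (Finset.notMem_empty _)
  · intro hone
    obtain ⟨a, ha⟩ := Finset.card_eq_one.mp hone
    subst ha
    have : A ∩ B = ∅ := by
      rw [Finset.eq_empty_iff_forall_notMem]
      intro i hi
      obtain ⟨hiA, hiB⟩ := Finset.mem_inter.mp hi
      simp only [hA, Finset.mem_filter, Finset.mem_univ, true_and] at hiA
      simp only [hB, Finset.mem_filter, Finset.mem_univ, true_and] at hiB
      obtain ⟨j1, hj1, hs1⟩ := (ho _).1 hiA
      obtain ⟨j2, hj2, hs2⟩ := (ho _).1 hiB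
      rw [Finset.mem_singleton] at hj1 hj2
      subst hj1; subst hj2
      rw [sig_emb1] at hs1
      rw [sig_emb2] at hs2
      rw [hs1] at hs2
      simp at hs2
    rw [this]
    simp
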